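/- Let K = {0,1} with discrete topology and H = {f ∈ C(K,𝔽²) : f(1) = ½(f₂(0), f₁(0))} ⊆ C(K, (𝔽², ∥·∥_p)), where f = (f₁,f₂). Then the evaluation operator φ_H(1) has norm exactly ½, while H_w = C(K,𝔽) so φ_{H_w}(1) has norm 1; hence ∥φ_H(t)∥ < ∥φ_{H_w}(t)∥ can occur. -/

import Mathlib

open ContinuousMap

/-- The function space `H = {f ∈ C({0,1}, 𝔽²) : f(1) = ½(f₂(0), f₁(0))}`
inside `C({0,1}, (𝔽², ‖·‖_p))`. -/
def H15 (p : ENNReal) [Fact (1 ≤ p)] :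
    Submodule ℝ C(Fin 2, PiLp p fun _ : Fin 2 => ℝ) where
  carrier := {f | f 1 0 = f 0 1 / 2 ∧ f 1 1 = f 0 0 / 2}
  add_mem' := by
    rintro f g ⟨hf1, hf2⟩ ⟨hg1, hg2⟩
    refine ⟨?_, ?_⟩
    · show ((f + g) : C(Fin 2, PiLp p fun _ : Fin 2 => ℝ)) 1 0
        = ((f + g) : C(Fin 2, PiLp p fun _ : Fin 2 => ℝ)) 0 1 / 2
      rw [ContinuousMap.add_apply, ContinuousMap.add_apply,
        PiLp.add_apply, PiLp.add_apply, hf1, hg1]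
      ring
    · show ((f + g) : C(Fin 2, PiLp p fun _ : Fin 2 => ℝ)) 1 1
        = ((f + g) : C(Fin 2, PiLp p fun _ : Fin 2 => ℝ)) 0 0 / 2
      rw [ContinuousMap.add_apply, ContinuousMap.add_apply,
        PiLp.add_apply, PiLp.add_apply, hf2, hg2]
      ring
  zero_mem' := by
    constructor <;> simp
  smul_mem' := by
    rintro c f ⟨hf1, hf2⟩
    refine ⟨?_, ?_⟩
    · show ((c • f) : C(Fin 2, PiLp p fun _ : Fin 2 => ℝ)) 1 0
        = ((c • f) : C(Fin 2, PiLp p fun _ : Fin 2 => ℝ)) 0 1 / 2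
      rw [ContinuousMap.smul_apply, ContinuousMap.smul_apply,
        PiLp.smul_apply, PiLp.smul_apply, hf1]
      simp only [smul_eq_mul]
      ring
    · show ((c • f) : C(Fin 2, PiLp p fun _ : Fin 2 => ℝ)) 1 1
        = ((c • f) : C(Fin 2, PiLp p fun _ : Fin 2 => ℝ)) 0 0 / 2
      rw [ContinuousMap.smul_apply, ContinuousMap.smul_apply,
        PiLp.smul_apply, PiLp.smul_apply, hf2]
      simp only [smul_eq_mul]
      ring



section Aux

variable (p : ENNReal) [Fact (1 ≤ p)]

/-- swap isometry on `PiLp p (Fin 2 → ℝ)` -/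
noncomputable def swapIso : (PiLp p fun _ : Fin 2 => ℝ) ≃ₗᵢ[ℝ] (PiLp p fun _ : Fin 2 => ℝ) :=
  LinearIsometryEquiv.piLpCongrLeft p ℝ ℝ (Equiv.swap 0 1)

lemma swapIso_apply (v : PiLp p fun _ : Fin 2 => ℝ) (i : Fin 2) :
    swapIso p v i = v (Equiv.swap 0 1 i) := by
  simp [swapIso, LinearIsometryEquiv.piLpCongrLeft_apply, Equiv.piCongrLeft']

lemma norm_apply_one (f : C(Fin 2, PiLp p fun _ : Fin 2 => ℝ))
    (h1 : f 1 0 = f 0 1 / 2) (h2 : f 1 1 = f 0 0 / 2) :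
    ‖f 1‖ = ‖f 0‖ / 2 := by
  have key : f 1 = (1 / 2 : ℝ) • swapIso p (f 0) := by
    ext i
    fin_cases i
    · simp [h1, swapIso_apply, PiLp.smul_apply, Equiv.swap_apply_def]
      ring
    · simp [h2, swapIso_apply, PiLp.smul_apply, Equiv.swap_apply_def]
      ring
  rw [key, norm_smul, (swapIso p).norm_map]
  simp
  ring

end Aux
section Main

variable (p : ENNReal) [Fact (1 ≤ p)]

/-- The extremal element of `H15`. -/
noncomputable def F15 : C(Fin 2, PiLp p fun _ : Fin 2 => ℝ) :=
  ⟨fun t => if t = 0 then (WithLp.equiv p _).symm (Pi.single 0 1)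
    else (WithLp.equiv p _).symm (Pi.single 1 (1/2 : ℝ)),
    continuous_of_discreteTopology⟩

lemma F15_apply_zero : F15 p 0 = (WithLp.equiv p _).symm (Pi.single 0 1) := rfl
lemma F15_apply_one : F15 p 1 = (WithLp.equiv p _).symm (Pi.single 1 (1/2 : ℝ)) := rfl

lemma F15_mem : F15 p 1 0 = F15 p 0 1 / 2 ∧ F15 p 1 1 = F15 p 0 0 / 2 := by
  constructor <;>
    simp [F15_apply_zero, F15_apply_one, WithLp.equiv_symm_apply, WithLp.ofLp_toLp, Pi.single_apply]

lemma F15_norm_le : ‖F15 p‖ ≤ 1 := by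
  rw [ContinuousMap.norm_le _ zero_le_one]
  intro t
  fin_cases t
  · rw [show (⟨0, by norm_num⟩ : Fin 2) = 0 from rfl, F15_apply_zero,
      WithLp.equiv_symm_apply, PiLp.norm_toLp_single]
    simp
  · rw [show (⟨1, by norm_num⟩ : Fin 2) = 1 from rfl, F15_apply_one,
      WithLp.equiv_symm_apply, PiLp.norm_toLp_single]
    norm_num

lemma F15_norm_one : ‖F15 p 1‖ = 1 / 2 := by
  rw [F15_apply_one, WithLp.equiv_symm_apply, PiLp.norm_toLp_single]
  norm_num

end Main
set_option linter.unusedSectionVars false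

section Main2

variable (p : ENNReal) [Fact (1 ≤ p)]

noncomputable def G1 : C(Fin 2, ℝ) :=
  ⟨fun t => if t = 0 then 1 else 0, continuous_of_discreteTopology⟩

noncomputable def G2 : C(Fin 2, ℝ) :=
  ⟨fun t => if t = 0 then 0 else 1/2, continuous_of_discreteTopology⟩

lemma G1_eq (t : Fin 2) : G1 t = (PiLp.proj (𝕜 := ℝ) p (fun _ : Fin 2 => ℝ) 0) (F15 p t) := by
  fin_cases t <;>
    simp [G1, F15, PiLp.proj_apply, WithLp.equiv_symm_apply, WithLp.ofLp_toLp, Pi.single_apply]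

lemma G2_eq (t : Fin 2) : G2 t = (PiLp.proj (𝕜 := ℝ) p (fun _ : Fin 2 => ℝ) 1) (F15 p t) := by
  fin_cases t <;>
    simp [G2, F15, PiLp.proj_apply, WithLp.equiv_symm_apply, WithLp.ofLp_toLp, Pi.single_apply]

end Main2

theorem stmt_15 (p : ENNReal) [Fact (1 ≤ p)] :
    (sSup ((fun f : C(Fin 2, PiLp p fun _ : Fin 2 => ℝ) => ‖f 1‖) ''
        {f : C(Fin 2, PiLp p fun _ : Fin 2 => ℝ) | f ∈ H15 p ∧ ‖f‖ ≤ 1}) = 1 / 2) ∧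
    (Submodule.span ℝ {g : C(Fin 2, ℝ) |
        ∃ f ∈ H15 p, ∃ x : (PiLp p fun _ : Fin 2 => ℝ) →L[ℝ] ℝ,
          ∀ t : Fin 2, g t = x (f t)}
      = ⊤) ∧
    (∀ ψ : C(Fin 2, ℝ) →L[ℝ] ℝ, (∀ g : C(Fin 2, ℝ), ψ g = g 1) → ‖ψ‖ = 1) := by
  refine ⟨?_, ?_, ?_⟩
  · -- Part 1
    have hub : ∀ y ∈ (fun f : C(Fin 2, PiLp p fun _ : Fin 2 => ℝ) => ‖f 1‖) ''
        {f : C(Fin 2, PiLp p fun _ : Fin 2 => ℝ) | f ∈ H15 p ∧ ‖f‖ ≤ 1}, y ≤ 1 / 2 := by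
      rintro y ⟨f, ⟨⟨h1, h2⟩, hle⟩, rfl⟩
      show ‖f 1‖ ≤ 1 / 2
      rw [norm_apply_one p f h1 h2]
      have : ‖f 0‖ ≤ 1 := le_trans (f.norm_coe_le_norm 0) hle
      linarith
    refine le_antisymm (Real.sSup_le hub (by norm_num)) ?_
    have hmem : (1 / 2 : ℝ) ∈ (fun f : C(Fin 2, PiLp p fun _ : Fin 2 => ℝ) => ‖f 1‖) ''
        {f : C(Fin 2, PiLp p fun _ : Fin 2 => ℝ) | f ∈ H15 p ∧ ‖f‖ ≤ 1} :=
      ⟨F15 p, ⟨F15_mem p, F15_norm_le p⟩, F15_norm_one p⟩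
    exact le_csSup ⟨1 / 2, hub⟩ hmem
  · -- Part 2
    rw [eq_top_iff]
    rintro g -
    have hG1 : G1 ∈ {g : C(Fin 2, ℝ) |
        ∃ f ∈ H15 p, ∃ x : (PiLp p fun _ : Fin 2 => ℝ) →L[ℝ] ℝ,
          ∀ t : Fin 2, g t = x (f t)} :=
      ⟨F15 p, F15_mem p, PiLp.proj (𝕜 := ℝ) p (fun _ : Fin 2 => ℝ) 0, G1_eq p⟩
    have hG2 : G2 ∈ {g : C(Fin 2, ℝ) |
        ∃ f ∈ H15 p, ∃ x : (PiLp p fun _ : Fin 2 => ℝ) →L[ℝ] ℝ,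
          ∀ t : Fin 2, g t = x (f t)} :=
      ⟨F15 p, F15_mem p, PiLp.proj (𝕜 := ℝ) p (fun _ : Fin 2 => ℝ) 1, G2_eq p⟩
    have hg : g = g 0 • G1 + (2 * g 1) • G2 := by
      ext t
      fin_cases t <;> simp [G1, G2] <;> ring
    rw [hg]
    exact Submodule.add_mem _
      (Submodule.smul_mem _ _ (Submodule.subset_span hG1))
      (Submodule.smul_mem _ _ (Submodule.subset_span hG2))
  · -- Part 3
    intro ψ hψ
    refine le_antisymm ?_ ?_
    · refine ContinuousLinearMap.opNorm_le_bound ψ zero_le_one fun g => ?_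
      rw [hψ g, one_mul]
      exact g.norm_coe_le_norm 1
    · have hc : ‖ContinuousMap.const (Fin 2) (1 : ℝ)‖ = 1 := by
        refine le_antisymm ((ContinuousMap.norm_le _ zero_le_one).2 fun t => by simp) ?_
        have := (ContinuousMap.const (Fin 2) (1 : ℝ)).norm_coe_le_norm 0
        simpa using this
      have := ψ.le_opNorm (ContinuousMap.const (Fin 2) (1 : ℝ))
      rw [hψ, hc, mul_one] at this
      simpa using this
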